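/- Let p be a prime, K a finite Galois extension of ℚ_p of degree d, α ∈ K with α ∉ O_K, and β a Galois conjugate of α. Let b_1, b_2 ∈ ℤ_p with b_1 + b_2 ≠ 0. Then for every integer ℓ ≥ 0 there exists i ∈ {1, 2, …, d} such that b_1 α^{ℓ+i} + b_2 β^{ℓ+i} ≠ 0. -/

import Mathlib

/-- Let `K` be a finite Galois extension of `ℚ_p` of degree `d`, `α ∈ K` not integral
over `ℤ_p`, `β = σ(α)` a Galois conjugate of `α`, and `b₁, b₂ ∈ ℤ_p` with
`b₁ + b₂ ≠ 0`. Then for every `ℓ ≥ 0` there is `i ∈ {1, …, d}` with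
`b₁ α^{ℓ+i} + b₂ β^{ℓ+i} ≠ 0`. -/
theorem nonvanishing_in_window (p : ℕ) [Fact p.Prime]
    (K : Type*) [Field K] [Algebra ℚ_[p] K] [FiniteDimensional ℚ_[p] K]
    [IsGalois ℚ_[p] K] [Algebra ℤ_[p] K] [IsScalarTower ℤ_[p] ℚ_[p] K]
    (d : ℕ) (hd : d = Module.finrank ℚ_[p] K)
    (α : K) (hα : ¬ IsIntegral ℤ_[p] α) (σ : K ≃ₐ[ℚ_[p]] K) (β : K) (hβ : β = σ α)
    (b₁ b₂ : ℤ_[p]) (hb : b₁ + b₂ ≠ 0) :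
    ∀ ℓ : ℕ, ∃ i ∈ Finset.Icc 1 d, b₁ • α ^ (ℓ + i) + b₂ • β ^ (ℓ + i) ≠ 0 := by
  have hinj : Function.Injective (algebraMap ℤ_[p] K) := by
    rw [IsScalarTower.algebraMap_eq ℤ_[p] ℚ_[p] K]
    refine (algebraMap ℚ_[p] K).injective.comp fun a b hab => ?_
    exact PadicInt.ext (by simpa [PadicInt.algebraMap_apply, Subtype.coe_inj] using hab)
  have hα0 : α ≠ 0 := fun h => hα (h ▸ isIntegral_zero)
  have hβ0 : β ≠ 0 := by
    rw [hβ]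
    simpa using hα0
  have hd1 : 1 ≤ d := hd ▸ Module.finrank_pos
  intro ℓ
  by_contra h
  push_neg at h
  simp only [Algebra.smul_def] at h
  set A := algebraMap ℤ_[p] K b₁ with hA
  set B := algebraMap ℤ_[p] K b₂ with hB
  -- helper to derive contradiction from (A+B) * α^n = 0
  have hsum : ∀ n : ℕ, A * α ^ n + B * α ^ n ≠ 0 := by
    intro n hn
    have : (A + B) * α ^ n = 0 := by linear_combination hn
    rcases mul_eq_zero.mp this with h1 | h1
    · exact hb (hinj (by simpa [map_add] using h1))
    · exact pow_ne_zero n hα0 h1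
  rcases eq_or_lt_of_le hd1 with hd1' | hd2
  · -- d = 1, so σ is the identity and β = α
    have hbot : (⊥ : Subalgebra ℚ_[p] K) = ⊤ :=
      Subalgebra.bot_eq_top_of_finrank_eq_one (hd ▸ hd1'.symm)
    have : α ∈ (⊥ : Subalgebra ℚ_[p] K) := hbot.symm ▸ trivial
    obtain ⟨c, hc⟩ := Algebra.mem_bot.mp this
    have hβα : β = α := by rw [hβ, ← hc, AlgEquiv.commutes]
    have e1 := h 1 (by simp [hd1])
    rw [hβα] at e1
    exact hsum (ℓ + 1) e1
  · have e1 := h 1 (Finset.mem_Icc.mpr ⟨le_refl 1, hd1⟩)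
    have e2 := h 2 (Finset.mem_Icc.mpr ⟨one_le_two, hd2⟩)
    have key : (B * β ^ (ℓ + 1)) * (β - α) = 0 := by linear_combination e2 - α * e1
    rcases mul_eq_zero.mp key with h1 | h1
    · rcases mul_eq_zero.mp h1 with h2 | h2
      · have hb2 : b₂ = 0 := hinj (h2.trans (map_zero _).symm)
        have hA0 : A * α ^ (ℓ + 1) = 0 := by
          simpa [hB, hb2] using e1
        rcases mul_eq_zero.mp hA0 with h3 | h3
        · have hb1 : b₁ = 0 := hinj (h3.trans (map_zero _).symm)
          exact hb (by rw [hb1, hb2, add_zero])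
        · exact pow_ne_zero _ hα0 h3
      · exact pow_ne_zero _ hβ0 h2
    · have hβα : β = α := sub_eq_zero.mp h1
      rw [hβα] at e1
      exact hsum (ℓ + 1) e1
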